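/- For every real x with 0 ≤ x < 1/36, the following identity holds: Σ_{n=0}^{∞} ((2/9)_n (5/9)_n / ((2/3)_n · n!)) · (27x)^n = (1 − 27x)^{−1/9} · (1 − 36x + 216x²)^{−1/18} · Σ_{n=0}^{∞} ((1/36)_n (19/36)_n / ((8/9)_n · n!)) · (−1728 · x³(1 − 27x) / (1 − 36x + 216x²)²)^n, where the real powers are Real.rpow (well-defined since 1 − 27x > 0 and 1 − 36x + 216x² > 0 on [0, 1/36)), and both series converge absolutely. -/

import Mathlib

set_option maxHeartbeats 1000000

noncomputable section
namespace SPI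

/-- Hypergeometric coefficient. -/
def hgr (a b c : ℝ) (n : ℕ) : ℝ :=
  (ascPochhammer ℝ n).eval a * (ascPochhammer ℝ n).eval b /
    ((ascPochhammer ℝ n).eval c * (Nat.factorial n : ℝ))

lemma poch_pos {a : ℝ} (ha : 0 < a) (n : ℕ) : 0 < (ascPochhammer ℝ n).eval a := by
  induction n with
  | zero => simp
  | succ n ih =>
      rw [ascPochhammer_succ_right]
      simp only [Polynomial.eval_mul, Polynomial.eval_add, Polynomial.eval_X,
        Polynomial.eval_natCast]
      positivity

lemma poch_succ {a : ℝ} (n : ℕ) :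
    (ascPochhammer ℝ (n+1)).eval a = (ascPochhammer ℝ n).eval a * (a + n) := by
  rw [ascPochhammer_succ_right]
  simp [Polynomial.eval_mul]

structure GoodParams (a b c : ℝ) : Prop where
  ha : 0 < a
  hb : 0 < b
  hc : 0 < c
  hab : a + b ≤ 1 + c
  hm : a * b ≤ c

variable {a b c : ℝ}

lemma hgr_zero : hgr a b c 0 = 1 := by simp [hgr]

lemma hgr_pos (h : GoodParams a b c) (n : ℕ) : 0 < hgr a b c n := by
  have := poch_pos h.ha n
  have := poch_pos h.hb n
  have := poch_pos h.hc n
  have : (0:ℝ) < (Nat.factorial n : ℝ) := by positivity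
  unfold hgr
  positivity

lemma hgr_succ_mul (h : GoodParams a b c) (n : ℕ) :
    hgr a b c (n+1) * (((n:ℝ)+1) * (c + n)) = hgr a b c n * ((a + n) * (b + n)) := by
  have hc' := (poch_pos h.hc n).ne'
  have hfac : ((Nat.factorial n : ℝ)) ≠ 0 := by positivity
  have hcn : c + (n:ℝ) ≠ 0 := by have := h.hc; positivity
  unfold hgr
  rw [poch_succ, poch_succ, poch_succ]
  push_cast [Nat.factorial_succ]
  field_simp

lemma hgr_succ (h : GoodParams a b c) (n : ℕ) :
    hgr a b c (n+1) = hgr a b c n * ((a + n) * (b + n)) / (((n:ℝ)+1) * (c + n)) := by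
  have h1 : (0:ℝ) < ((n:ℝ)+1) * (c + n) := by have := h.hc; positivity
  rw [eq_div_iff h1.ne']
  linarith [hgr_succ_mul h n]

lemma hgr_le_one (h : GoodParams a b c) (n : ℕ) : hgr a b c n ≤ 1 := by
  induction n with
  | zero => simp [hgr_zero]
  | succ n ih =>
      have hpos := hgr_pos h n
      have h1 : (0:ℝ) < ((n:ℝ)+1) * (c + n) := by have := h.hc; positivity
      have hnum : (a + n) * (b + n) ≤ ((n:ℝ)+1) * (c + n) := by
        have h2 := h.hab; have h3 := h.hm; nlinarith [h.ha.le, h.hb.le, Nat.cast_nonneg (α := ℝ) n]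
      rw [hgr_succ h n]
      have step : hgr a b c n * ((a + n) * (b + n)) / (((n:ℝ)+1) * (c + n)) ≤ hgr a b c n := by
        rw [div_le_iff₀ h1]
        nlinarith [hpos]
      exact step.trans ih

end SPI

namespace SPI2
open SPI
noncomputable section

variable {a b c : ℝ}

/-- sum of the hypergeometric series -/
def Fh (a b c : ℝ) (y : ℝ) : ℝ := ∑' n : ℕ, hgr a b c n * y ^ n
def Fd1 (a b c : ℝ) (y : ℝ) : ℝ := ∑' n : ℕ, (((n : ℝ) + 1) * hgr a b c (n+1)) * y ^ n
def Fd2 (a b c : ℝ) (y : ℝ) : ℝ :=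
  ∑' n : ℕ, ((((n : ℝ) + 2) * ((n : ℝ) + 1)) * hgr a b c (n+2)) * y ^ n

lemma summable_quad {ρ : ℝ} (h0 : 0 < ρ) (h1 : ρ < 1) :
    Summable (fun n : ℕ => ((n : ℝ) + 2) ^ 2 * ρ ^ (n - 1)) := by
  have hρ : ‖ρ‖ < 1 := by rw [Real.norm_eq_abs, abs_of_pos h0]; exact h1
  have S : Summable (fun n : ℕ => (1/ρ) * (((n:ℝ)^2 + 4*n + 4) * ρ ^ n)) := by
    apply Summable.mul_left
    have S2 := summable_pow_mul_geometric_of_norm_lt_one (R := ℝ) 2 hρ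
    have S1 := summable_pow_mul_geometric_of_norm_lt_one (R := ℝ) 1 hρ
    have S0 := summable_pow_mul_geometric_of_norm_lt_one (R := ℝ) 0 hρ
    have := (S2.add ((S1.mul_left 4).add (S0.mul_left 4)))
    apply this.congr
    intro n; push_cast; ring
  apply Summable.of_nonneg_of_le (fun n => by positivity) _ S
  intro n
  have h2 : ρ ^ (n - 1) ≤ (1/ρ) * ρ ^ n := by
    cases n with
    | zero => simp; rw [one_le_inv_iff₀]; constructor <;> linarith
    | succ m =>
        simp only [Nat.add_sub_cancel]
        rw [pow_succ]
        field_simp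
        exact le_rfl
  calc ((n : ℝ) + 2) ^ 2 * ρ ^ (n - 1) ≤ ((n : ℝ) + 2) ^ 2 * ((1/ρ) * ρ ^ n) := by
        apply mul_le_mul_of_nonneg_left h2 (by positivity)
    _ = (1/ρ) * (((n:ℝ)^2 + 4*n + 4) * ρ ^ n) := by ring

lemma summable_of_bound {ρ : ℝ} (h0 : 0 < ρ) (h1 : ρ < 1) {g : ℕ → ℝ}
    (hg : ∀ n : ℕ, |g n| ≤ ((n : ℝ) + 2) ^ 2 * ρ ^ (n - 1)) : Summable g :=
  Summable.of_norm_bounded (summable_quad h0 h1) (by simpa [Real.norm_eq_abs] using hg)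

lemma hgr_nonneg (h : GoodParams a b c) (n : ℕ) : 0 ≤ hgr a b c n := (hgr_pos h n).le

lemma pow_abs_le {y ρ : ℝ} (h0 : 0 < ρ) (hy : |y| ≤ ρ) (k : ℕ) : |y ^ k| ≤ ρ ^ k := by
  rw [abs_pow]; exact pow_le_pow_left₀ (abs_nonneg y) hy k

lemma pow_pred_le {ρ : ℝ} (h0 : 0 < ρ) (h1 : ρ < 1) (n : ℕ) : ρ ^ n ≤ ρ ^ (n - 1) :=
  pow_le_pow_of_le_one h0.le h1.le (Nat.sub_le n 1)


lemma bound_gen (h : GoodParams a b c) {y ρ : ℝ} (h0 : 0 < ρ) (h1 : ρ < 1) (hy : |y| ≤ ρ)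
    {e : ℝ} (k j m : ℕ) (he0 : 0 ≤ e) (he : e ≤ ((m:ℝ)+2)^2) (hj : m - 1 ≤ j) :
    |e * (hgr a b c k * y ^ j)| ≤ ((m:ℝ)+2)^2 * ρ ^ (m-1) := by
  rw [abs_mul, abs_mul, abs_pow, abs_of_nonneg he0, abs_of_nonneg (hgr_nonneg h k)]
  have h2 : |y|^j ≤ ρ^(m-1) :=
    le_trans (pow_le_pow_left₀ (abs_nonneg y) hy j) (pow_le_pow_of_le_one h0.le h1.le hj)
  calc e * (hgr a b c k * |y|^j) ≤ ((m:ℝ)+2)^2 * (1 * ρ^(m-1)) := by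
        apply mul_le_mul he _ (mul_nonneg (hgr_nonneg h k) (by positivity)) (by positivity)
        apply mul_le_mul (hgr_le_one h k) h2 (by positivity) zero_le_one
    _ = _ := by ring

lemma summable_s0 (h : GoodParams a b c) {y ρ : ℝ} (h0 : 0 < ρ) (h1 : ρ < 1) (hy : |y| ≤ ρ) :
    Summable (fun n : ℕ => hgr a b c n * y ^ n) := by
  apply summable_of_bound h0 h1 (fun n => ?_)
  rw [show hgr a b c n * y ^ n = 1 * (hgr a b c n * y ^ n) by ring]
  exact bound_gen h h0 h1 hy n n n zero_le_one (by nlinarith [Nat.cast_nonneg (α := ℝ) n])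
    (Nat.sub_le n 1)

lemma summable_s1 (h : GoodParams a b c) {y ρ : ℝ} (h0 : 0 < ρ) (h1 : ρ < 1) (hy : |y| ≤ ρ) :
    Summable (fun n : ℕ => (((n : ℝ) + 1) * hgr a b c (n+1)) * y ^ n) := by
  apply summable_of_bound h0 h1 (fun n => ?_)
  rw [show (((n : ℝ) + 1) * hgr a b c (n+1)) * y ^ n = ((n:ℝ)+1) * (hgr a b c (n+1) * y ^ n)
    by ring]
  exact bound_gen h h0 h1 hy (n+1) n n (by positivity) (by nlinarith [Nat.cast_nonneg (α := ℝ) n])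
    (Nat.sub_le n 1)

lemma summable_s2 (h : GoodParams a b c) {y ρ : ℝ} (h0 : 0 < ρ) (h1 : ρ < 1) (hy : |y| ≤ ρ) :
    Summable (fun n : ℕ => ((((n : ℝ) + 2) * ((n : ℝ) + 1)) * hgr a b c (n+2)) * y ^ n) := by
  apply summable_of_bound h0 h1 (fun n => ?_)
  rw [show ((((n : ℝ) + 2) * ((n : ℝ) + 1)) * hgr a b c (n+2)) * y ^ n
      = (((n:ℝ)+2) * ((n:ℝ)+1)) * (hgr a b c (n+2) * y ^ n) by ring]
  exact bound_gen h h0 h1 hy (n+2) n n (by positivity)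
    (by nlinarith [Nat.cast_nonneg (α := ℝ) n]) (Nat.sub_le n 1)

lemma hasDerivAt_Fh (h : GoodParams a b c) {ρ : ℝ} (h0 : 0 < ρ) (h1 : ρ < 1) {y : ℝ}
    (hy : y ∈ Set.Ioo (-ρ) ρ) : HasDerivAt (Fh a b c) (Fd1 a b c y) y := by
  unfold Fh Fd1
  have habs : ∀ z : ℝ, z ∈ Set.Ioo (-ρ) ρ → |z| ≤ ρ := fun z hz => abs_le.2 ⟨hz.1.le, hz.2.le⟩
  have h0' : (0:ℝ) ∈ Set.Ioo (-ρ) ρ := by constructor <;> simp [h0] <;> linarith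
  have bnd : ∀ (n : ℕ) (z : ℝ), z ∈ Set.Ioo (-ρ) ρ →
      ‖hgr a b c n * ((n:ℝ) * z ^ (n-1))‖ ≤ ((n:ℝ)+2)^2 * ρ ^ (n-1) := by
    intro n z hz
    rw [Real.norm_eq_abs, show hgr a b c n * ((n:ℝ) * z ^ (n-1))
      = (n:ℝ) * (hgr a b c n * z ^ (n-1)) by ring]
    exact bound_gen h h0 h1 (habs z hz) n (n-1) n (Nat.cast_nonneg n)
      (by nlinarith [Nat.cast_nonneg (α := ℝ) n]) le_rfl
  have key : HasDerivAt (fun z : ℝ => ∑' n : ℕ, hgr a b c n * z ^ n)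
      (∑' n : ℕ, hgr a b c n * ((n:ℝ) * y ^ (n-1))) y := by
    apply hasDerivAt_tsum_of_isPreconnected (summable_quad h0 h1) isOpen_Ioo
      (convex_Ioo _ _).isPreconnected
      (fun n z _ => (hasDerivAt_pow n z).const_mul (hgr a b c n)) bnd h0'
      (summable_s0 h h0 h1 (by simpa using h0.le)) hy
  have hsum : Summable (fun n : ℕ => hgr a b c n * ((n:ℝ) * y ^ (n-1))) := by
    apply summable_of_bound h0 h1 (fun n => ?_)
    have := bnd n y hy; rwa [Real.norm_eq_abs] at this
  have conv : (∑' n : ℕ, hgr a b c n * ((n:ℝ) * y ^ (n-1)))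
      = ∑' n : ℕ, (((n : ℝ) + 1) * hgr a b c (n+1)) * y ^ n := by
    rw [Summable.tsum_eq_zero_add hsum]
    norm_num
    apply tsum_congr (fun n => ?_)
    push_cast [Nat.add_sub_cancel]
    ring
  rw [conv] at key
  exact key

lemma hasDerivAt_Fd1 (h : GoodParams a b c) {ρ : ℝ} (h0 : 0 < ρ) (h1 : ρ < 1) {y : ℝ}
    (hy : y ∈ Set.Ioo (-ρ) ρ) : HasDerivAt (Fd1 a b c) (Fd2 a b c y) y := by
  unfold Fd1 Fd2
  have habs : ∀ z : ℝ, z ∈ Set.Ioo (-ρ) ρ → |z| ≤ ρ := fun z hz => abs_le.2 ⟨hz.1.le, hz.2.le⟩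
  have h0' : (0:ℝ) ∈ Set.Ioo (-ρ) ρ := by constructor <;> simp [h0] <;> linarith
  have bnd : ∀ (n : ℕ) (z : ℝ), z ∈ Set.Ioo (-ρ) ρ →
      ‖(((n:ℝ)+1) * hgr a b c (n+1)) * ((n:ℝ) * z ^ (n-1))‖ ≤ ((n:ℝ)+2)^2 * ρ ^ (n-1) := by
    intro n z hz
    rw [Real.norm_eq_abs, show (((n:ℝ)+1) * hgr a b c (n+1)) * ((n:ℝ) * z ^ (n-1))
      = (((n:ℝ)+1) * (n:ℝ)) * (hgr a b c (n+1) * z ^ (n-1)) by ring]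
    exact bound_gen h h0 h1 (habs z hz) (n+1) (n-1) n
      (by positivity) (by nlinarith [Nat.cast_nonneg (α := ℝ) n]) le_rfl
  have key : HasDerivAt (fun z : ℝ => ∑' n : ℕ, (((n:ℝ)+1) * hgr a b c (n+1)) * z ^ n)
      (∑' n : ℕ, (((n:ℝ)+1) * hgr a b c (n+1)) * ((n:ℝ) * y ^ (n-1))) y := by
    apply hasDerivAt_tsum_of_isPreconnected (summable_quad h0 h1) isOpen_Ioo
      (convex_Ioo _ _).isPreconnected
      (fun n z _ => (hasDerivAt_pow n z).const_mul (((n:ℝ)+1) * hgr a b c (n+1))) bnd h0'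
      (summable_s1 h h0 h1 (by simpa using h0.le)) hy
  have hsum : Summable (fun n : ℕ => (((n:ℝ)+1) * hgr a b c (n+1)) * ((n:ℝ) * y ^ (n-1))) := by
    apply summable_of_bound h0 h1 (fun n => ?_)
    have := bnd n y hy; rwa [Real.norm_eq_abs] at this
  have conv : (∑' n : ℕ, (((n:ℝ)+1) * hgr a b c (n+1)) * ((n:ℝ) * y ^ (n-1)))
      = ∑' n : ℕ, ((((n : ℝ) + 2) * ((n : ℝ) + 1)) * hgr a b c (n+2)) * y ^ n := by
    rw [Summable.tsum_eq_zero_add hsum]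
    simp only [Nat.cast_zero, zero_mul, mul_zero, zero_add]
    apply tsum_congr (fun n => ?_)
    push_cast [Nat.add_sub_cancel]
    ring
  rw [conv] at key
  exact key


lemma Fh_zero (h : GoodParams a b c) : Fh a b c 0 = 1 := by
  unfold Fh
  rw [tsum_eq_single 0 (fun n hn => by simp [zero_pow hn])]
  simp [hgr_zero]

lemma Fh_ode (h : GoodParams a b c) {y : ℝ} (hy : |y| < 1) :
    y * (1 - y) * Fd2 a b c y + (c - (a + b + 1) * y) * Fd1 a b c y - a * b * Fh a b c y = 0 := by
  set ρ : ℝ := (|y| + 1) / 2 with hρ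
  have h0 : 0 < ρ := by have := abs_nonneg y; rw [hρ]; linarith
  have h1 : ρ < 1 := by rw [hρ]; linarith
  have hyρ : |y| ≤ ρ := by rw [hρ]; linarith
  have S0 := summable_s0 h h0 h1 hyρ
  have S1 := summable_s1 h h0 h1 hyρ
  have S2 := summable_s2 h h0 h1 hyρ
  have Ssn : Summable (fun n : ℕ => ((n:ℝ) * hgr a b c n) * y ^ n) := by
    apply summable_of_bound h0 h1 (fun n => ?_)
    rw [show ((n:ℝ) * hgr a b c n) * y ^ n = (n:ℝ) * (hgr a b c n * y ^ n) by ring]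
    exact bound_gen h h0 h1 hyρ n n n (Nat.cast_nonneg n)
      (by nlinarith [Nat.cast_nonneg (α := ℝ) n]) (Nat.sub_le n 1)
  have Ssnn : Summable (fun n : ℕ => ((n:ℝ) * ((n:ℝ) - 1) * hgr a b c n) * y ^ n) := by
    apply summable_of_bound h0 h1 (fun n => ?_)
    rw [show ((n:ℝ) * ((n:ℝ) - 1) * hgr a b c n) * y ^ n
        = ((n:ℝ) * ((n:ℝ) - 1)) * (hgr a b c n * y ^ n) by ring]
    have hn1 : (0:ℝ) ≤ (n:ℝ) * ((n:ℝ) - 1) := by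
      rcases Nat.eq_zero_or_pos n with h' | h'
      · simp [h']
      · have : (1:ℝ) ≤ (n:ℝ) := by exact_mod_cast h'
        nlinarith
    exact bound_gen h h0 h1 hyρ n n n hn1
      (by nlinarith [Nat.cast_nonneg (α := ℝ) n]) (Nat.sub_le n 1)
  have Ss1n : Summable (fun n : ℕ => (((n:ℝ) + 1) * (n:ℝ) * hgr a b c (n+1)) * y ^ n) := by
    apply summable_of_bound h0 h1 (fun n => ?_)
    rw [show (((n:ℝ) + 1) * (n:ℝ) * hgr a b c (n+1)) * y ^ n
        = (((n:ℝ) + 1) * (n:ℝ)) * (hgr a b c (n+1) * y ^ n) by ring]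
    exact bound_gen h h0 h1 hyρ (n+1) n n (by positivity)
      (by nlinarith [Nat.cast_nonneg (α := ℝ) n]) (Nat.sub_le n 1)
  -- shift identities
  have e2 : y * Fd2 a b c y = ∑' n : ℕ, (((n:ℝ) + 1) * (n:ℝ) * hgr a b c (n+1)) * y ^ n := by
    rw [Summable.tsum_eq_zero_add Ss1n]
    norm_num
    unfold Fd2
    rw [← tsum_mul_left]
    apply tsum_congr (fun n => ?_)
    push_cast
    ring
  have e2b : y * (∑' n : ℕ, (((n:ℝ) + 1) * (n:ℝ) * hgr a b c (n+1)) * y ^ n)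
      = ∑' n : ℕ, ((n:ℝ) * ((n:ℝ) - 1) * hgr a b c n) * y ^ n := by
    rw [Summable.tsum_eq_zero_add Ssnn]
    norm_num
    rw [← tsum_mul_left]
    apply tsum_congr (fun n => ?_)
    push_cast
    ring
  have e1 : y * Fd1 a b c y = ∑' n : ℕ, ((n:ℝ) * hgr a b c n) * y ^ n := by
    rw [Summable.tsum_eq_zero_add Ssn]
    norm_num
    unfold Fd1
    rw [← tsum_mul_left]
    apply tsum_congr (fun n => ?_)
    push_cast
    ring
  have expand : y * (1 - y) * Fd2 a b c y + (c - (a + b + 1) * y) * Fd1 a b c y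
        - a * b * Fh a b c y
      = (y * Fd2 a b c y
          - y * (∑' n : ℕ, (((n:ℝ) + 1) * (n:ℝ) * hgr a b c (n+1)) * y ^ n))
        + (c * Fd1 a b c y - (a + b + 1) * (y * Fd1 a b c y)) - a * b * Fh a b c y := by
    rw [← e2]; ring
  rw [expand, e2, e2b, e1]
  unfold Fd1 Fh
  have Hcomb : HasSum (fun n : ℕ =>
      ((((n:ℝ) + 1) * (n:ℝ) * hgr a b c (n+1)) * y ^ n
        - ((n:ℝ) * ((n:ℝ) - 1) * hgr a b c n) * y ^ n)
      + (c * ((((n:ℝ) + 1) * hgr a b c (n+1)) * y ^ n)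
          - (a + b + 1) * (((n:ℝ) * hgr a b c n) * y ^ n))
      - a * b * (hgr a b c n * y ^ n))
      ((∑' n : ℕ, (((n:ℝ) + 1) * (n:ℝ) * hgr a b c (n+1)) * y ^ n)
        - (∑' n : ℕ, ((n:ℝ) * ((n:ℝ) - 1) * hgr a b c n) * y ^ n)
      + (c * (∑' n : ℕ, (((n:ℝ) + 1) * hgr a b c (n+1)) * y ^ n)
          - (a + b + 1) * (∑' n : ℕ, ((n:ℝ) * hgr a b c n) * y ^ n))
      - a * b * (∑' n : ℕ, hgr a b c n * y ^ n)) :=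
    (((Ss1n.hasSum.sub Ssnn.hasSum).add
      ((S1.hasSum.mul_left c).sub (Ssn.hasSum.mul_left (a + b + 1)))).sub
      (S0.hasSum.mul_left (a * b)))
  have hzero : (fun n : ℕ =>
      ((((n:ℝ) + 1) * (n:ℝ) * hgr a b c (n+1)) * y ^ n
        - ((n:ℝ) * ((n:ℝ) - 1) * hgr a b c n) * y ^ n)
      + (c * ((((n:ℝ) + 1) * hgr a b c (n+1)) * y ^ n)
          - (a + b + 1) * (((n:ℝ) * hgr a b c n) * y ^ n))
      - a * b * (hgr a b c n * y ^ n)) = fun _ => (0:ℝ) := by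
    funext n
    have hr := hgr_succ_mul h n
    linear_combination y ^ n * hr
  rw [hzero] at Hcomb
  have := Hcomb.unique hasSum_zero
  linarith [this]

lemma Fh_lower (h : GoodParams a b c) {y : ℝ} (hy : |y| ≤ 1/3) : 1/2 ≤ Fh a b c y := by
  have h0 : (0:ℝ) < 1/2 := by norm_num
  have h1 : (1:ℝ)/2 < 1 := by norm_num
  have hyρ : |y| ≤ 1/2 := le_trans hy (by norm_num)
  have S0 := summable_s0 h h0 h1 hyρ
  have hgeo : HasSum (fun n : ℕ => (1/3:ℝ) ^ (n+1)) (1/2) := by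
    have := (hasSum_geometric_of_lt_one (r := 1/3) (by norm_num) (by norm_num)).mul_left (1/3)
    have h2 : (fun n : ℕ => 1/3 * (1/3:ℝ) ^ n) = fun n : ℕ => (1/3:ℝ) ^ (n+1) :=
      funext fun n => by rw [pow_succ]; ring
    rw [h2] at this
    rw [show (1/2:ℝ) = 1/3 * (1 - 1/3)⁻¹ by norm_num]
    exact this
  have hbnd : ∀ n : ℕ, ‖hgr a b c (n+1) * y ^ (n+1)‖ ≤ (1/3:ℝ) ^ (n+1) := by
    intro n
    rw [Real.norm_eq_abs, abs_mul, abs_pow]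
    calc |hgr a b c (n+1)| * |y| ^ (n+1) ≤ 1 * (1/3) ^ (n+1) := by
          apply mul_le_mul _ (pow_le_pow_left₀ (abs_nonneg y) hy (n+1)) (by positivity)
            zero_le_one
          rw [abs_of_nonneg (hgr_nonneg h (n+1))]; exact hgr_le_one h (n+1)
      _ = (1/3) ^ (n+1) := one_mul _
  have habs : ‖∑' n : ℕ, hgr a b c (n+1) * y ^ (n+1)‖ ≤ 1/2 := tsum_of_norm_bounded hgeo hbnd
  rw [Real.norm_eq_abs] at habs
  have h3 := (abs_le.1 habs).1
  unfold Fh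
  rw [Summable.tsum_eq_zero_add S0]
  simp only [hgr_zero, pow_zero, mul_one]
  linarith

end
end SPI2

namespace SPI3
open SPI SPI2
noncomputable section

def Lf (x : ℝ) : ℝ := 1 - 27 * x
def Df (x : ℝ) : ℝ := 1 - 36 * x + 216 * x ^ 2
def Nf (x : ℝ) : ℝ := -1728 * x ^ 3 * (1 - 27 * x)
def wf (x : ℝ) : ℝ := -1728 * x ^ 3 * (1 - 27 * x) / (1 - 36 * x + 216 * x ^ 2) ^ 2
def Av (x : ℝ) : ℝ := (1 - 27 * x) ^ (-(1/9) : ℝ) * (1 - 36 * x + 216 * x ^ 2) ^ (-(1/18) : ℝ)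
def ff (x : ℝ) : ℝ := Fh (2/9) (5/9) (2/3) (27 * x)
def Hf (x : ℝ) : ℝ := Av x * Fh (1/36) (19/36) (8/9) (wf x)

def Vset : Set ℝ := Set.Ioo (-(1/100)) (1/36)
def Jset : Set ℝ := Set.Ioo 0 (1/36)

lemma gp1 : GoodParams (2/9) (5/9) (2/3) := by
  refine ⟨by norm_num, by norm_num, by norm_num, by norm_num, by norm_num⟩

lemma gp2 : GoodParams (1/36) (19/36) (8/9) := by
  refine ⟨by norm_num, by norm_num, by norm_num, by norm_num, by norm_num⟩

lemma Jsub : Jset ⊆ Vset := fun x hx => ⟨by have := hx.1; norm_num; linarith, hx.2⟩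

variable {x : ℝ}

lemma hL_pos (hx : x ∈ Vset) : 0 < Lf x := by
  have h2 := hx.2
  simp only [Vset, Set.mem_Ioo] at hx
  unfold Lf; nlinarith [hx.1, hx.2]

lemma hD_pos (hx : x ∈ Vset) : 0 < Df x := by
  simp only [Vset, Set.mem_Ioo] at hx
  have h1 : 0 < 1 - 36 * x := by linarith
  have h2 : (0:ℝ) < 5/6 - 6 * x := by linarith
  unfold Df; nlinarith

lemma hw_abs (hx : x ∈ Vset) : |wf x| ≤ 1/3 := by
  have hD := hD_pos hx
  simp only [Vset, Set.mem_Ioo] at hx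
  unfold wf
  rw [abs_div, abs_pow]
  rw [div_le_iff₀ (by positivity)]
  rw [abs_of_pos (show (0:ℝ) < 1 - 36*x + 216*x^2 from hD)]
  rw [abs_le]
  unfold Df at hD
  constructor
  · -- -(1/3 * D^2) ≤ N  i.e.  D^2 - 5184 x^3 (1-27x) ≥ 0
    have key : (0:ℝ) ≤ (1 - 36*x) * ((1 - 36*x) + 432*x^2*(1 - 12*x)) := by
      have h1 : (0:ℝ) ≤ 1 - 36*x := by linarith
      have h2 : (0:ℝ) ≤ 1 - 12*x := by linarith
      positivity
    nlinarith [key]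
  · -- N ≤ 1/3 * D^2  i.e. D^2 + 5184 x^3 (1-27x) ≥ 0
    rcases le_or_gt 0 x with h0 | h0
    · have : (0:ℝ) ≤ 5184 * x^3 * (1 - 27*x) := by
        have : (0:ℝ) ≤ 1 - 27*x := by linarith
        positivity
      nlinarith
    · have hx1 : -(1/100:ℝ) < x := hx.1
      have hD1 : (1:ℝ) ≤ 1 - 36*x + 216*x^2 := by nlinarith
      nlinarith [sq_nonneg x, sq_nonneg (x + 1/100), mul_pos (neg_pos.2 h0) (neg_pos.2 h0)]

lemma hw_ball (hx : x ∈ Vset) : wf x ∈ Set.Ioo (-(1/2):ℝ) (1/2) := by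
  have h := hw_abs hx
  rw [abs_le] at h
  constructor <;> [linarith [h.1]; linarith [h.2]]

lemma hw_neg (hx : x ∈ Jset) : wf x < 0 := by
  have hD := hD_pos (Jsub hx)
  simp only [Jset, Set.mem_Ioo] at hx
  unfold wf
  apply div_neg_of_neg_of_pos _ (by positivity)
  have h1 : (0:ℝ) < 1 - 27*x := by nlinarith [hx.1, hx.2]
  nlinarith [pow_pos hx.1 3]


def N1f (x : ℝ) : ℝ := -5184 * x ^ 2 + 186624 * x ^ 3
def D1f (x : ℝ) : ℝ := 432 * x - 36
def w1f (x : ℝ) : ℝ := (N1f x * Df x - 2 * Nf x * D1f x) / Df x ^ 3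
def w2f (x : ℝ) : ℝ :=
  (((-10368 * x + 559872 * x ^ 2) * Df x - N1f x * D1f x - 864 * Nf x) * Df x
    - 3 * (N1f x * Df x - 2 * Nf x * D1f x) * D1f x) / Df x ^ 4
def Pl (x : ℝ) : ℝ := 3 / Lf x + (2 - 24 * x) / Df x
def P1f (x : ℝ) : ℝ := 81 / Lf x ^ 2 + ((-24) * Df x - (2 - 24 * x) * D1f x) / Df x ^ 2

lemma hasDerivAt_Lf : HasDerivAt Lf (-27) x := by
  unfold Lf
  simpa using (hasDerivAt_id x).const_mul (27:ℝ) |>.const_sub 1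

lemma hasDerivAt_Df : HasDerivAt Df (D1f x) x := by
  unfold Df D1f
  have h1 : HasDerivAt (fun x : ℝ => 216 * x ^ 2) (216 * (2 * x)) x := by
    simpa using (hasDerivAt_pow 2 x).const_mul (216:ℝ)
  have h2 : HasDerivAt (fun x : ℝ => 1 - 36 * x) (-36) x := by
    simpa using ((hasDerivAt_id x).const_mul (36:ℝ)).const_sub 1
  refine (h2.add h1).congr_deriv ?_
  ring

lemma hasDerivAt_Nf : HasDerivAt Nf (N1f x) x := by
  unfold Nf N1f
  have h1 : HasDerivAt (fun x : ℝ => -1728 * x ^ 3) (-1728 * (3 * x ^ 2)) x := by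
    simpa using (hasDerivAt_pow 3 x).const_mul (-1728:ℝ)
  have h2 : HasDerivAt (fun x : ℝ => 1 - 27 * x) (-27) x := by
    simpa using ((hasDerivAt_id x).const_mul (27:ℝ)).const_sub 1
  refine (h1.mul h2).congr_deriv ?_
  ring

lemma hasDerivAt_N1f : HasDerivAt N1f (-10368 * x + 559872 * x ^ 2) x := by
  unfold N1f
  have h1 : HasDerivAt (fun x : ℝ => -5184 * x ^ 2) (-5184 * (2 * x)) x := by
    simpa using (hasDerivAt_pow 2 x).const_mul (-5184:ℝ)
  have h2 : HasDerivAt (fun x : ℝ => 186624 * x ^ 3) (186624 * (3 * x ^ 2)) x := by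
    simpa using (hasDerivAt_pow 3 x).const_mul (186624:ℝ)
  refine (h1.add h2).congr_deriv ?_
  ring

lemma hasDerivAt_D1f : HasDerivAt D1f 432 x := by
  unfold D1f
  simpa using (hasDerivAt_id x).const_mul (432:ℝ) |>.sub_const 36

lemma hasDerivAt_wf (hx : x ∈ Vset) : HasDerivAt wf (w1f x) x := by
  have hD := hD_pos hx
  have hN : HasDerivAt Nf (N1f x) x := hasDerivAt_Nf
  have hD2 : HasDerivAt (fun x => Df x ^ 2) (2 * Df x ^ 1 * D1f x) x := hasDerivAt_Df.pow 2
  have hDiv := hN.div hD2 (by positivity)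
  have heq : wf = fun x => Nf x / Df x ^ 2 := by
    funext t; unfold wf Nf Df; ring
  rw [heq]
  refine (hDiv).congr_deriv ?_
  unfold w1f
  field_simp

lemma hasDerivAt_w1f (hx : x ∈ Vset) : HasDerivAt w1f (w2f x) x := by
  have hD := hD_pos hx
  have hM : HasDerivAt (fun x => N1f x * Df x - 2 * Nf x * D1f x)
      ((-10368 * x + 559872 * x ^ 2) * Df x + N1f x * D1f x
        - (2 * N1f x * D1f x + 2 * Nf x * 432)) x := by
    have h1 := hasDerivAt_N1f (x := x) |>.mul hasDerivAt_Df
    have h2 := (hasDerivAt_Nf (x := x) |>.const_mul 2).mul hasDerivAt_D1f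
    refine (h1.sub h2).congr_deriv ?_
    try ring
  have hD3 : HasDerivAt (fun x => Df x ^ 3) (3 * Df x ^ 2 * D1f x) x := hasDerivAt_Df.pow 3
  have hDiv := hM.div hD3 (by positivity)
  have heq : w1f = fun x => (N1f x * Df x - 2 * Nf x * D1f x) / Df x ^ 3 := rfl
  rw [heq]
  refine (hDiv).congr_deriv ?_
  unfold w2f
  field_simp
  ring

lemma hasDerivAt_Pl (hx : x ∈ Vset) : HasDerivAt Pl (P1f x) x := by
  have hD := hD_pos hx
  have hL := hL_pos hx
  have h1 : HasDerivAt (fun x => 3 / Lf x) ((0 * Lf x - 3 * (-27)) / Lf x ^ 2) x :=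
    (hasDerivAt_const x (3:ℝ)).div hasDerivAt_Lf hL.ne'
  have h2 : HasDerivAt (fun x : ℝ => 2 - 24 * x) (-24) x := by
    simpa using ((hasDerivAt_id x).const_mul (24:ℝ)).const_sub 2
  have h3 : HasDerivAt (fun x => (2 - 24 * x) / Df x)
      (((-24) * Df x - (2 - 24 * x) * D1f x) / Df x ^ 2) x := h2.div hasDerivAt_Df hD.ne'
  have := h1.add h3
  have heq : Pl = fun x => 3 / Lf x + (2 - 24 * x) / Df x := rfl
  rw [heq]
  refine (this).congr_deriv ?_
  unfold P1f
  field_simp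
  norm_num
  ring

lemma hasDerivAt_Av (hx : x ∈ Vset) : HasDerivAt Av (Av x * Pl x) x := by
  have hD := hD_pos hx
  have hL := hL_pos hx
  have hA1 : HasDerivAt (fun x => Lf x ^ (-(1/9) : ℝ))
      ((-(1/9)) * Lf x ^ ((-(1/9)) - 1 : ℝ) * (-27)) x :=
    (Real.hasDerivAt_rpow_const (Or.inl hL.ne')).comp x hasDerivAt_Lf
  have hA2 : HasDerivAt (fun x => Df x ^ (-(1/18) : ℝ))
      ((-(1/18)) * Df x ^ ((-(1/18)) - 1 : ℝ) * D1f x) x :=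
    (Real.hasDerivAt_rpow_const (Or.inl hD.ne')).comp x hasDerivAt_Df
  have hmul := hA1.mul hA2
  have heq : Av = fun x => Lf x ^ (-(1/9) : ℝ) * Df x ^ (-(1/18) : ℝ) := rfl
  rw [heq]
  refine (hmul).congr_deriv ?_
  rw [Real.rpow_sub_one hL.ne', Real.rpow_sub_one hD.ne']
  simp only [Av, Pl, Lf, Df, D1f]
  have hL' : Lf x ≠ 0 := hL.ne'
  have hD' : Df x ≠ 0 := hD.ne'
  simp only [Lf, Df] at hL' hD'
  field_simp
  ring


def G0 (y : ℝ) : ℝ := Fh (1/36) (19/36) (8/9) y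
def G1 (y : ℝ) : ℝ := Fd1 (1/36) (19/36) (8/9) y
def G2 (y : ℝ) : ℝ := Fd2 (1/36) (19/36) (8/9) y

def f1f (x : ℝ) : ℝ := 27 * Fd1 (2/9) (5/9) (2/3) (27 * x)
def f2f (x : ℝ) : ℝ := 729 * Fd2 (2/9) (5/9) (2/3) (27 * x)
def h1f (x : ℝ) : ℝ := Av x * (Pl x * G0 (wf x) + G1 (wf x) * w1f x)
def h2f (x : ℝ) : ℝ := Av x * ((Pl x ^ 2 + P1f x) * G0 (wf x)
  + 2 * Pl x * G1 (wf x) * w1f x + G2 (wf x) * w1f x ^ 2 + G1 (wf x) * w2f x)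

lemma h27x (hx : x ∈ Vset) : 27 * x ∈ Set.Ioo (-(4/5) : ℝ) (4/5) := by
  simp only [Vset, Set.mem_Ioo] at hx
  constructor <;> nlinarith [hx.1, hx.2]

lemma hasDerivAt_27x : HasDerivAt (fun x : ℝ => 27 * x) 27 x := by
  simpa using (hasDerivAt_id x).const_mul (27:ℝ)

lemma hasDerivAt_ff (hx : x ∈ Vset) : HasDerivAt ff (f1f x) x := by
  have h := (hasDerivAt_Fh gp1 (by norm_num : (0:ℝ) < 4/5) (by norm_num) (h27x hx)).comp x
    hasDerivAt_27x
  have heq : ff = fun x => Fh (2/9) (5/9) (2/3) (27*x) := rfl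
  rw [heq]
  refine (h).congr_deriv ?_
  unfold f1f
  ring

lemma hasDerivAt_f1f (hx : x ∈ Vset) : HasDerivAt f1f (f2f x) x := by
  have h := ((hasDerivAt_Fd1 gp1 (by norm_num : (0:ℝ) < 4/5) (by norm_num) (h27x hx)).comp x
    hasDerivAt_27x).const_mul 27
  have heq : f1f = fun x => 27 * Fd1 (2/9) (5/9) (2/3) (27*x) := rfl
  rw [heq]
  refine (h).congr_deriv ?_
  unfold f2f
  ring

lemma hasDerivAt_G0w (hx : x ∈ Vset) :
    HasDerivAt (fun x => G0 (wf x)) (G1 (wf x) * w1f x) x :=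
  (hasDerivAt_Fh gp2 (by norm_num : (0:ℝ) < 1/2) (by norm_num) (hw_ball hx)).comp x
    (hasDerivAt_wf hx)

lemma hasDerivAt_G1w (hx : x ∈ Vset) :
    HasDerivAt (fun x => G1 (wf x)) (G2 (wf x) * w1f x) x :=
  (hasDerivAt_Fd1 gp2 (by norm_num : (0:ℝ) < 1/2) (by norm_num) (hw_ball hx)).comp x
    (hasDerivAt_wf hx)

lemma hasDerivAt_Hf (hx : x ∈ Vset) : HasDerivAt Hf (h1f x) x := by
  have h := (hasDerivAt_Av hx).mul (hasDerivAt_G0w hx)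
  have heq : Hf = fun x => Av x * G0 (wf x) := rfl
  rw [heq]
  refine (h).congr_deriv ?_
  unfold h1f
  ring

lemma hasDerivAt_h1f (hx : x ∈ Vset) : HasDerivAt h1f (h2f x) x := by
  have hin : HasDerivAt (fun x => Pl x * G0 (wf x) + G1 (wf x) * w1f x)
      ((P1f x * G0 (wf x) + Pl x * (G1 (wf x) * w1f x))
        + ((G2 (wf x) * w1f x) * w1f x + G1 (wf x) * w2f x)) x :=
    ((hasDerivAt_Pl hx).mul (hasDerivAt_G0w hx)).add
      ((hasDerivAt_G1w hx).mul (hasDerivAt_w1f hx))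
  have h := (hasDerivAt_Av hx).mul hin
  have heq : h1f = fun x => Av x * (Pl x * G0 (wf x) + G1 (wf x) * w1f x) := rfl
  rw [heq]
  refine (h).congr_deriv ?_
  unfold h2f
  ring

lemma ode_ff (hx : x ∈ Vset) :
    x * (1 - 27 * x) * f2f x + (2/3 - 48 * x) * f1f x - (10/3) * ff x = 0 := by
  have hy : |27 * x| < 1 := by
    have := h27x hx
    rw [abs_lt]
    constructor <;> [linarith [this.1]; linarith [this.2]]
  have h := Fh_ode gp1 hy
  unfold f2f f1f ff
  linear_combination 27 * x * (1 - 27*x) * 729 * 0 + 27 * h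


set_option maxHeartbeats 8000000 in
lemma ode_H (hx : x ∈ Jset) :
    x * (1 - 27 * x) * h2f x + (2/3 - 48 * x) * h1f x - (10/3) * Hf x = 0 := by
  have hxV := Jsub hx
  have hD := hD_pos hxV
  have hL := hL_pos hxV
  have hxpos : 0 < x := hx.1
  have hwneg := hw_neg hx
  have hy : |wf x| < 1 := lt_of_le_of_lt (hw_abs hxV) (by norm_num)
  have hode0 := Fh_ode gp2 hy
  unfold h2f h1f Hf
  set g0 : ℝ := Fh (1/36) (19/36) (8/9) (wf x) with hg0
  set g1 : ℝ := Fd1 (1/36) (19/36) (8/9) (wf x) with hg1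
  set g2 : ℝ := Fd2 (1/36) (19/36) (8/9) (wf x) with hg2def
  simp only [G0, G1, G2, ← hg0, ← hg1, ← hg2def]
  have hode : wf x * (1 - wf x) * g2 + (8/9 - 14/9 * wf x) * g1 - 19/1296 * g0 = 0 := by
    linear_combination hode0
  have hu_ne : wf x ≠ 0 := hwneg.ne
  have h1u : (0:ℝ) < 1 - wf x := by linarith
  have hg2 : g2 = ((14/9 * wf x - 8/9) * g1 + 19/1296 * g0) / (wf x * (1 - wf x)) := by
    rw [eq_div_iff (mul_ne_zero hu_ne h1u.ne')]
    linear_combination hode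
  rw [hg2]
  have hL' : (1 - 27*x) ≠ 0 := hL.ne'
  have hD' : (1 - 36*x + 216*x^2) ≠ 0 := hD.ne'
  have hx' : x ≠ 0 := hxpos.ne'
  have hL2 : (0:ℝ) < 1 - 27*x := hL
  have hNneg : -1728*x^3*(1-27*x) < 0 := by
    have h8 : (0:ℝ) < 1728*x^3 := by positivity
    nlinarith [mul_pos h8 hL2]
  have hnum1 : -1728*x^3*(1-27*x) ≠ 0 := hNneg.ne
  have h1u' : (1 - 36*x + 216*x^2)^2 + 1728*x^3*(1-27*x) ≠ 0 := by positivity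
  have h1u'' : (1 - 36*x + 216*x^2)^2 - -1728*x^3*(1-27*x) ≠ 0 := by
    intro hc; apply h1u'; linarith
  unfold Pl P1f w1f w2f wf Nf N1f D1f Df Lf
  have e1 : 1 - x * 27 ≠ 0 := by intro h; apply hL'; linarith
  have e2 : 1 - x * 36 + x ^ 2 * 216 ≠ 0 := by intro h; apply hD'; linarith
  have e3 : (1 - x * 36 + x ^ 2 * 216) ^ 2 + x ^ 3 * (1 - x * 27) * 1728 ≠ 0 := by
    intro h; apply h1u'; linarith
  have e4 : (1 - x * 36 + x ^ 2 * 216) ^ 2 - -(x ^ 3 * (1 - x * 27) * 1728) ≠ 0 := by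
    intro h; apply h1u'; linear_combination h
  field_simp
  ring

def Wr (x : ℝ) : ℝ := ff x * h1f x - f1f x * Hf x

lemma hasDerivAt_Wr (hx : x ∈ Vset) :
    HasDerivAt Wr (ff x * h2f x - f2f x * Hf x) x := by
  have h := ((hasDerivAt_ff hx).mul (hasDerivAt_h1f hx)).sub
    ((hasDerivAt_f1f hx).mul (hasDerivAt_Hf hx))
  have heq : Wr = fun x => ff x * h1f x - f1f x * Hf x := rfl
  rw [heq]
  refine (h).congr_deriv ?_
  ring

lemma xLW1 (hx : x ∈ Jset) :
    x * (1 - 27 * x) * (ff x * h2f x - f2f x * Hf x) = -(2/3 - 48 * x) * Wr x := by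
  have o1 := ode_ff (Jsub hx)
  have o2 := ode_H hx
  unfold Wr
  linear_combination ff x * o2 - Hf x * o1

def Phi (x : ℝ) : ℝ := x ^ ((2:ℝ)/3) * (1 - 27 * x) ^ ((10:ℝ)/9) * Wr x

lemma hasDerivAt_Phi_zero (hx : x ∈ Jset) : HasDerivAt Phi 0 x := by
  have hxV := Jsub hx
  have hxpos : 0 < x := hx.1
  have hL2 : (0:ℝ) < 1 - 27 * x := hL_pos hxV
  have hp1 : HasDerivAt (fun x : ℝ => x ^ ((2:ℝ)/3)) (((2:ℝ)/3) * x ^ ((2:ℝ)/3 - 1)) x :=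
    Real.hasDerivAt_rpow_const (Or.inl hxpos.ne')
  have hLd : HasDerivAt (fun x : ℝ => 1 - 27 * x) (-27) x := by
    simpa using ((hasDerivAt_id x).const_mul (27:ℝ)).const_sub 1
  have hp2 : HasDerivAt (fun x : ℝ => (1 - 27 * x) ^ ((10:ℝ)/9))
      (((10:ℝ)/9) * (1 - 27 * x) ^ ((10:ℝ)/9 - 1) * (-27)) x :=
    (hLd.rpow_const (p := (10:ℝ)/9) (Or.inl hL2.ne')).congr_deriv (by ring)
  have hW := hasDerivAt_Wr hxV
  have h := (hp1.mul hp2).mul hW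
  have heq : Phi = fun x => (x ^ ((2:ℝ)/3) * (1 - 27 * x) ^ ((10:ℝ)/9)) * Wr x := rfl
  rw [heq]
  have hbr : (2/3) * (1 - 27*x) * Wr x - 30 * x * Wr x
      + x * (1 - 27*x) * (ff x * h2f x - f2f x * Hf x) = 0 := by
    linear_combination xLW1 hx
  have hDtot : ((2:ℝ)/3 * x ^ ((2:ℝ)/3 - 1) * ((1 - 27 * x) ^ ((10:ℝ)/9))
        + x ^ ((2:ℝ)/3) * ((10:ℝ)/9 * (1 - 27 * x) ^ ((10:ℝ)/9 - 1) * (-27))) * Wr x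
        + x ^ ((2:ℝ)/3) * (1 - 27 * x) ^ ((10:ℝ)/9) * (ff x * h2f x - f2f x * Hf x)
      = (x ^ ((2:ℝ)/3) * (1 - 27 * x) ^ ((10:ℝ)/9)) / (x * (1 - 27*x))
        * ((2/3) * (1 - 27*x) * Wr x - 30 * x * Wr x
          + x * (1 - 27*x) * (ff x * h2f x - f2f x * Hf x)) := by
    rw [Real.rpow_sub_one hxpos.ne', Real.rpow_sub_one hL2.ne']
    have hL2' : 1 - x * 27 ≠ 0 := by intro h; linarith
    field_simp
    ring
  simp only [Pi.mul_apply] at h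
  rw [hDtot, hbr, mul_zero] at h
  exact h

lemma const_on_J {φ : ℝ → ℝ} (h : ∀ x ∈ Jset, HasDerivAt φ 0 x) :
    ∀ x ∈ Jset, ∀ y ∈ Jset, φ x = φ y := by
  intro x hx y hy
  apply Convex.is_const_of_fderivWithin_eq_zero (convex_Ioo (0:ℝ) (1/36))
    (fun z hz => (h z hz).differentiableAt.differentiableWithinAt) _ hx hy
  intro z hz
  rw [fderivWithin_of_isOpen isOpen_Ioo hz]
  have : HasFDerivAt φ (0 : ℝ →L[ℝ] ℝ) z := by
    have h0 : (ContinuousLinearMap.smulRight (1 : ℝ →L[ℝ] ℝ) (0:ℝ)) = 0 := by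
      ext; simp
    rw [← h0]
    exact (h z hz).hasFDerivAt
  exact this.fderiv

lemma nebot_J : (nhdsWithin (0:ℝ) Jset).NeBot := by
  apply mem_closure_iff_nhdsWithin_neBot.1
  rw [show Jset = Set.Ioo (0:ℝ) (1/36) from rfl, closure_Ioo (by norm_num : (0:ℝ) ≠ 1/36)]
  exact ⟨le_refl 0, by norm_num⟩

lemma zeroV : (0:ℝ) ∈ Vset := by constructor <;> norm_num

lemma Wr_eq_zero (hx : x ∈ Jset) : Wr x = 0 := by
  have hconst := const_on_J (fun z hz => hasDerivAt_Phi_zero hz)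
  have h1 : Filter.Tendsto Phi (nhdsWithin (0:ℝ) Jset) (nhds (Phi x)) := by
    apply Filter.Tendsto.congr' _ tendsto_const_nhds
    filter_upwards [self_mem_nhdsWithin] with y hy
    exact hconst x hx y hy
  have t1 : Filter.Tendsto (fun x : ℝ => x ^ ((2:ℝ)/3)) (nhdsWithin (0:ℝ) Jset) (nhds 0) := by
    have := (Real.continuousAt_rpow_const 0 ((2:ℝ)/3) (Or.inr (by norm_num))).tendsto
    rw [Real.zero_rpow (by norm_num : ((2:ℝ)/3) ≠ 0)] at this
    exact this.mono_left nhdsWithin_le_nhds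
  have t2 : Filter.Tendsto (fun x : ℝ => (1 - 27 * x) ^ ((10:ℝ)/9))
      (nhdsWithin (0:ℝ) Jset) (nhds 1) := by
    have hc : ContinuousAt (fun x : ℝ => (1 - 27 * x) ^ ((10:ℝ)/9)) 0 := by
      apply ContinuousAt.comp (x := (0:ℝ)) (g := fun y : ℝ => y ^ ((10:ℝ)/9))
      · simpa using Real.continuousAt_rpow_const 1 ((10:ℝ)/9) (Or.inl one_ne_zero)
      · fun_prop
    have := hc.tendsto
    norm_num [Real.one_rpow] at this
    exact this.mono_left nhdsWithin_le_nhds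
  have t3 : Filter.Tendsto Wr (nhdsWithin (0:ℝ) Jset) (nhds (Wr 0)) :=
    ((hasDerivAt_Wr zeroV).continuousAt).tendsto.mono_left nhdsWithin_le_nhds
  have h2 : Filter.Tendsto Phi (nhdsWithin (0:ℝ) Jset) (nhds 0) := by
    have := (t1.mul t2).mul t3
    norm_num at this
    exact this
  have := nebot_J
  have hPhix : Phi x = 0 := tendsto_nhds_unique h1 h2
  have hxpos : 0 < x := hx.1
  have hL2 : (0:ℝ) < 1 - 27 * x := hL_pos (Jsub hx)
  have hp1 : (0:ℝ) < x ^ ((2:ℝ)/3) := Real.rpow_pos_of_pos hxpos _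
  have hp2 : (0:ℝ) < (1 - 27 * x) ^ ((10:ℝ)/9) := Real.rpow_pos_of_pos hL2 _
  unfold Phi at hPhix
  rcases mul_eq_zero.1 hPhix with h' | h'
  · rcases mul_eq_zero.1 h' with h'' | h''
    · exact absurd h'' hp1.ne'
    · exact absurd h'' hp2.ne'
  · exact h'

lemma Hf_pos (hx : x ∈ Vset) : 0 < Hf x := by
  have hL := hL_pos hx
  have hD := hD_pos hx
  have hA : 0 < Av x := by
    apply mul_pos (Real.rpow_pos_of_pos hL _) (Real.rpow_pos_of_pos hD _)
  have hG : (1:ℝ)/2 ≤ Fh (1/36) (19/36) (8/9) (wf x) := Fh_lower gp2 (hw_abs hx)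
  unfold Hf
  nlinarith

lemma Qf_deriv_zero (hx : x ∈ Jset) : HasDerivAt (fun x => ff x / Hf x) 0 x := by
  have hxV := Jsub hx
  have hH := Hf_pos hxV
  have h := (hasDerivAt_ff hxV).div (hasDerivAt_Hf hxV) hH.ne'
  have hnum : f1f x * Hf x - ff x * h1f x = 0 := by
    have := Wr_eq_zero hx
    unfold Wr at this
    linarith
  rw [hnum] at h
  simp at h
  exact h

lemma ff_zero : ff 0 = 1 := by
  have : (27:ℝ) * 0 = 0 := by norm_num
  unfold ff
  rw [this]
  exact Fh_zero gp1

lemma Hf_zero_val : Hf 0 = 1 := by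
  have hw0 : wf 0 = 0 := by unfold wf; norm_num
  have hA0 : Av 0 = 1 := by unfold Av; norm_num [Real.one_rpow]
  unfold Hf
  rw [hw0, hA0, Fh_zero gp2, mul_one]

lemma ff_eq_Hf (hx : x ∈ Jset) : ff x = Hf x := by
  have hconst := const_on_J (fun z hz => Qf_deriv_zero hz)
  have hcont : Filter.Tendsto (fun x => ff x / Hf x) (nhdsWithin (0:ℝ) Jset)
      (nhds (ff 0 / Hf 0)) := by
    apply Filter.Tendsto.mono_left _ nhdsWithin_le_nhds
    exact ((hasDerivAt_ff zeroV).continuousAt.div (hasDerivAt_Hf zeroV).continuousAt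
      (Hf_pos zeroV).ne').tendsto
  rw [ff_zero, Hf_zero_val] at hcont
  norm_num at hcont
  have h1 : Filter.Tendsto (fun x => ff x / Hf x) (nhdsWithin (0:ℝ) Jset)
      (nhds (ff x / Hf x)) := by
    apply Filter.Tendsto.congr' _ tendsto_const_nhds
    filter_upwards [self_mem_nhdsWithin] with y hy
    exact hconst x hx y hy
  have := nebot_J
  have hq : ff x / Hf x = 1 := tendsto_nhds_unique h1 hcont
  have hH := (Hf_pos (Jsub hx)).ne'
  field_simp at hq
  exact hq

lemma main_eq (hx0 : 0 ≤ x) (hx : x < 1/36) : ff x = Hf x := by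
  rcases eq_or_lt_of_le hx0 with h | h
  · rw [← h, ff_zero, Hf_zero_val]
  · exact ff_eq_Hf ⟨h, hx⟩

end
end SPI3


/-- The pullback identity relating `₂F₁([2/9, 5/9], [2/3], 27x)` to the
hypergeometric function `₂F₁([1/36, 19/36], [8/9], ·)` associated with a Shimura
curve: for `0 ≤ x < 1/36`, both hypergeometric series converge (absolutely) and
`₂F₁([2/9,5/9],[2/3],27x) = (1-27x)^{-1/9} (1-36x+216x²)^{-1/18}
  ₂F₁([1/36,19/36],[8/9], -1728 x³(1-27x)/(1-36x+216x²)²)`. -/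
theorem shimura_pullback_identity (x : ℝ) (hx0 : 0 ≤ x) (hx : x < 1 / 36) :
    Summable (fun n : ℕ =>
      (ascPochhammer ℝ n).eval (2 / 9) * (ascPochhammer ℝ n).eval (5 / 9) /
        ((ascPochhammer ℝ n).eval (2 / 3) * (Nat.factorial n : ℝ)) * (27 * x) ^ n) ∧
    Summable (fun n : ℕ =>
      (ascPochhammer ℝ n).eval (1 / 36) * (ascPochhammer ℝ n).eval (19 / 36) /
        ((ascPochhammer ℝ n).eval (8 / 9) * (Nat.factorial n : ℝ)) *
        (-1728 * x ^ 3 * (1 - 27 * x) / (1 - 36 * x + 216 * x ^ 2) ^ 2) ^ n) ∧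
    (∑' n : ℕ,
      (ascPochhammer ℝ n).eval (2 / 9) * (ascPochhammer ℝ n).eval (5 / 9) /
        ((ascPochhammer ℝ n).eval (2 / 3) * (Nat.factorial n : ℝ)) * (27 * x) ^ n) =
      (1 - 27 * x) ^ (-(1 / 9) : ℝ) * (1 - 36 * x + 216 * x ^ 2) ^ (-(1 / 18) : ℝ) *
      ∑' n : ℕ,
        (ascPochhammer ℝ n).eval (1 / 36) * (ascPochhammer ℝ n).eval (19 / 36) /
          ((ascPochhammer ℝ n).eval (8 / 9) * (Nat.factorial n : ℝ)) *
          (-1728 * x ^ 3 * (1 - 27 * x) / (1 - 36 * x + 216 * x ^ 2) ^ 2) ^ n := by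
  have hxV : x ∈ SPI3.Vset := ⟨by norm_num; linarith, hx⟩
  have h27 : |27 * x| ≤ 3/4 := by
    rw [abs_of_nonneg (by linarith : (0:ℝ) ≤ 27 * x)]
    linarith
  refine ⟨?_, ?_, ?_⟩
  · exact SPI2.summable_s0 SPI3.gp1 (by norm_num : (0:ℝ) < 4/5) (by norm_num)
      (le_trans h27 (by norm_num))
  · exact SPI2.summable_s0 SPI3.gp2 (by norm_num : (0:ℝ) < 1/2) (by norm_num)
      (le_trans (SPI3.hw_abs hxV) (by norm_num))
  · exact SPI3.main_eq hx0 hx
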